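/- Let P be an infinite partially ordered set. The following are equivalent: (i) P is wqo and every ideal of P distinct from P is principal; (ii) P has no infinite antichain and every ideal of P distinct from P is finite; (iii) every proper initial segment of P is finite; (iv) every linear extension of P has order type ω (is order-isomorphic to ℕ); (v) P is well-founded, level-finite, of height ω, and for each n < ω there is m < ω such that each element of height at most n is below every element of height at least m; (vi) P embeds none of the following: an infinite antichain; a chain of order type ω* (an infinite strictly descending sequence); a chain of order type ω+1 (a strictly increasing sequence together with an element above all its terms); the direct sum ω ⊕ 1 (a strictly increasing sequence together with an element incomparable to all its terms). -/

import Mathlib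

open Set

/-- `s` is an initial segment of the finite set `t` (w.r.t. increasing enumerations). -/
def InitSeg (s t : Finset ℕ) : Prop :=
  s ⊆ t ∧ ∀ x ∈ s, ∀ y ∈ t, y ∉ s → x < y

/-- `s` is an initial segment of the set `X ⊆ ℕ`. -/
def InitSegSet (s : Finset ℕ) (X : Set ℕ) : Prop :=
  ↑s ⊆ X ∧ ∀ x ∈ s, ∀ y ∈ X, y ∉ s → x < y

/-- The union of a family of finite subsets of `ℕ`. -/
def unionOf (B : Set (Finset ℕ)) : Set ℕ := ⋃ s ∈ B, (s : Set ℕ)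

/-- `B` is a block: `B` is infinite and every infinite subset of `⋃ B` has a nonempty
initial segment belonging to `B`. -/
def IsBlock (B : Set (Finset ℕ)) : Prop :=
  B.Infinite ∧ ∀ X : Set ℕ, X ⊆ unionOf B → X.Infinite →
    ∃ s ∈ B, s.Nonempty ∧ InitSegSet s X

/-- `B` is a barrier: a block no member of which is a proper subset of another member. -/
def IsBarrier (B : Set (Finset ℕ)) : Prop :=
  IsBlock B ∧ ∀ s ∈ B, ∀ t ∈ B, s ⊆ t → s = t

/-- `B` is a thin block: a block which is an antichain under the initial-segment order. -/
def IsThinBlock (B : Set (Finset ℕ)) : Prop :=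
  IsBlock B ∧ ∀ s ∈ B, ∀ t ∈ B, InitSeg s t → s = t

/-- `s ◁ t`: there is `r` such that `s` is a proper initial segment of `r` and `t` is
obtained from `r` by removing its least element. -/
def Tri (s t : Finset ℕ) : Prop :=
  ∃ r : Finset ℕ, InitSeg s r ∧ s ≠ r ∧ ∃ a ∈ r, (∀ b ∈ r, a ≤ b) ∧ t = r.erase a

/-- The map `f` is good on `B` w.r.t. the quasi-order `le`. -/
def GoodPair {Q : Type*} (le : Q → Q → Prop) (B : Set (Finset ℕ)) (f : Finset ℕ → Q) : Prop :=
  ∃ s ∈ B, ∃ t ∈ B, Tri s t ∧ le (f s) (f t)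

/-- A quasi-order is better-quasi-ordered if every map from every barrier into it is good. -/
def IsBqo {Q : Type*} (le : Q → Q → Prop) : Prop :=
  ∀ B : Set (Finset ℕ), IsBarrier B → ∀ f : Finset ℕ → Q, GoodPair le B f

/-- A quasi-order is well-quasi-ordered if it has no infinite strictly descending sequence
and no infinite antichain. -/
def IsWqo {Q : Type*} (le : Q → Q → Prop) : Prop :=
  (¬ ∃ f : ℕ → Q, ∀ n, le (f (n + 1)) (f n) ∧ ¬ le (f n) (f (n + 1))) ∧
    ¬ ∃ f : ℕ → Q, ∀ m n : ℕ, m ≠ n → ¬ le (f m) (f n)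

/-- The strict lexicographic order on finite subsets of `ℕ` (via increasing enumerations;
a proper initial segment is lexicographically smaller). -/
def lexLT (s t : Finset ℕ) : Prop :=
  List.Lex (· < ·) (s.sort (· ≤ ·)) (t.sort (· ≤ ·))

/-- The order type of `B` under the lexicographic order is at most `α`: there is a
map of `B` into the ordinals `< α` which is strictly increasing w.r.t. `lexLT`. -/
def TypeLE (B : Set (Finset ℕ)) (α : Ordinal) : Prop :=
  ∃ g : Finset ℕ → Ordinal, (∀ s ∈ B, g s < α) ∧
    ∀ s ∈ B, ∀ t ∈ B, lexLT s t → g s < g t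

/-- A quasi-order is `α`-better-quasi-ordered if every map from a barrier of order type
at most `α` into it is good. -/
def IsAlphaBqo (α : Ordinal) {Q : Type*} (le : Q → Q → Prop) : Prop :=
  ∀ B : Set (Finset ℕ), IsBarrier B → TypeLE B α →
    ∀ f : Finset ℕ → Q, GoodPair le B f

/-- Domination quasi-order on subsets of a quasi-ordered set. -/
def DomRel {Q : Type*} (le : Q → Q → Prop) (A B : Set Q) : Prop :=
  ∀ a ∈ A, ∃ b ∈ B, le a b

/-- `I` is an ideal: nonempty, downward closed and up-directed. -/
def IsIdealRel {Q : Type*} (le : Q → Q → Prop) (I : Set Q) : Prop :=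
  I.Nonempty ∧ (∀ x y, le x y → y ∈ I → x ∈ I) ∧
    ∀ x ∈ I, ∀ y ∈ I, ∃ z ∈ I, le x z ∧ le y z

/-- `I` is principal: it has a greatest element. -/
def IsPrincipalRel {Q : Type*} (le : Q → Q → Prop) (I : Set Q) : Prop :=
  ∃ a ∈ I, ∀ x ∈ I, le x a

/-- A maximal antichain: an antichain not properly contained in any other antichain. -/
def IsMaxAntichainRel {Q : Type*} (le : Q → Q → Prop) (A : Set Q) : Prop :=
  IsAntichain le A ∧ ∀ B : Set Q, IsAntichain le B → A ⊆ B → A = B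

/-- An interval order: no `a < b`, `c < d` with each of `a, b` incomparable to each
of `c, d`. -/
def IsIntervalOrder (P : Type*) [Preorder P] : Prop :=
  ¬ ∃ a b c d : P, a < b ∧ c < d ∧
    ¬ a ≤ c ∧ ¬ c ≤ a ∧ ¬ a ≤ d ∧ ¬ d ≤ a ∧
    ¬ b ≤ c ∧ ¬ c ≤ b ∧ ¬ b ≤ d ∧ ¬ d ≤ b

/-- `a ≤_pred b` iff every strict predecessor of `a` is a strict predecessor of `b`. -/
def predLE {P : Type*} [PartialOrder P] (a b : P) : Prop := ∀ x, x < a → x < b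

/-- `a ≤_succ b` iff every strict successor of `b` is a strict successor of `a`. -/
def succLE {P : Type*} [PartialOrder P] (a b : P) : Prop := ∀ y, b < y → a < y

/-- `a ≤_crit b` iff `a ≤_pred b` and `a ≤_succ b`. -/
def critLE {P : Type*} [PartialOrder P] (a b : P) : Prop := predLE a b ∧ succLE a b

/-- There is a strictly increasing chain of `n + 1` elements of `P` ending at `x`
(so that `x` has height at least `n` in a well-founded poset). -/
def ChainTo {P : Type*} [PartialOrder P] (x : P) (n : ℕ) : Prop :=
  ∃ c : Fin (n + 1) → P, StrictMono c ∧ c (Fin.last n) = x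

/-- `x` has height exactly `n`. -/
def HeightIs {P : Type*} [PartialOrder P] (x : P) (n : ℕ) : Prop :=
  ChainTo x n ∧ ¬ ChainTo x (n + 1)

section AuxLemmas
variable {P : Type*} [PartialOrder P]

lemma chainTo_zero (x : P) : ChainTo x 0 := by
  refine ⟨fun _ => x, ?_, rfl⟩
  intro i j hij
  have hi := i.isLt; have hj := j.isLt
  rw [Fin.lt_def] at hij; omega

lemma chainTo_mono {x : P} {m n : ℕ} (h : ChainTo x n) (hmn : m ≤ n) : ChainTo x m := by
  obtain ⟨c, hc, hlast⟩ := h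
  refine ⟨fun i => c ⟨i + (n - m), by omega⟩, ?_, ?_⟩
  · intro i j hij
    apply hc
    rw [Fin.lt_def] at hij ⊢
    simpa using by omega
  · simp only
    rw [← hlast]
    congr 1
    ext
    simp [Fin.last]
    omega

lemma chainTo_succ {x y : P} {n : ℕ} (h : ChainTo x n) (hxy : x < y) : ChainTo y (n + 1) := by
  obtain ⟨c, hc, hlast⟩ := h
  refine ⟨fun i => if h : (i : ℕ) < n + 1 then c ⟨i, h⟩ else y, ?_, ?_⟩
  · intro i j hij
    have hi := i.isLt; have hj := j.isLt
    rw [Fin.lt_def] at hij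
    by_cases hj' : (j : ℕ) < n + 1
    · have hi' : (i : ℕ) < n + 1 := by omega
      simp only [hi', hj', dif_pos]
      exact hc (by rw [Fin.lt_def]; simpa using hij)
    · have hi' : (i : ℕ) < n + 1 := by omega
      simp only [hi', dif_pos, hj', dif_neg, not_false_iff]
      calc c ⟨i, hi'⟩ ≤ c (Fin.last n) := hc.monotone (by rw [Fin.le_def]; simp [Fin.last]; omega)
        _ = x := hlast
        _ < y := hxy
  · simp [Fin.last]

/-- every strictly increasing chain to x has its proper part in the strict downset -/
lemma chainTo_le_card {x : P} {n : ℕ} (h : ChainTo x n) (hfin : {y : P | y < x}.Finite) :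
    n ≤ hfin.toFinset.card := by
  classical
  obtain ⟨c, hc, hlast⟩ := h
  have himg : (Finset.univ.image (fun i : Fin n => c i.castSucc)) ⊆ hfin.toFinset := by
    intro y hy
    simp only [Finset.mem_image] at hy
    obtain ⟨i, -, rfl⟩ := hy
    simp only [Set.Finite.mem_toFinset, Set.mem_setOf_eq]
    rw [← hlast]
    exact hc (Fin.castSucc_lt_last i)
  calc n = (Finset.univ.image (fun i : Fin n => c i.castSucc)).card := by
        rw [Finset.card_image_of_injective _ (fun i j hij => by
          have := hc.injective hij
          exact Fin.castSucc_injective _ this)]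
        simp
    _ ≤ hfin.toFinset.card := Finset.card_le_card himg

/-- Ramsey-type lemma: no infinite antichain + no descending sequence implies
every infinite set contains a strictly increasing sequence. -/
lemma lemA (hac : ¬ ∃ A : Set P, IsAntichain (· ≤ ·) A ∧ A.Infinite)
    (hdesc : ¬ ∃ f : ℕ → P, ∀ n, f (n + 1) < f n)
    (S : Set P) (hS : S.Infinite) : ∃ f : ℕ → P, StrictMono f ∧ ∀ n, f n ∈ S := by
  -- well-foundedness of <
  have hwf : WellFounded ((· < ·) : P → P → Prop) := by
    rw [RelEmbedding.wellFounded_iff_isEmpty]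
    constructor
    intro g
    exact hdesc ⟨g, fun n => g.map_rel_iff.mpr (Nat.lt_succ_self n)⟩
  have key : ∀ T : Set P, T.Infinite → ∃ a ∈ T, ({x ∈ T | a < x}).Infinite := by
    intro T hT
    by_contra hcon
    push_neg at hcon
    set M := {y ∈ T | ∀ z ∈ T, ¬ z < y} with hM
    have hMac : IsAntichain (· ≤ ·) M := by
      intro y hy y' hy' hne hle
      exact hy'.2 y hy.1 (lt_of_le_of_ne hle hne)
    have hMfin : M.Finite := by
      by_contra hMinf
      exact hac ⟨M, hMac, fun h => hMinf h⟩
    have hcover : T ⊆ ⋃ m ∈ M, ({x ∈ T | m < x} ∪ {m}) := by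
      intro x hx
      obtain ⟨m, hm, hmin⟩ := hwf.has_min {y ∈ T | y ≤ x} ⟨x, hx, le_refl x⟩
      have hmM : m ∈ M := ⟨hm.1, fun z hz hzm => hmin z ⟨hz, (hzm.le.trans hm.2)⟩ hzm⟩
      simp only [Set.mem_iUnion]
      refine ⟨m, hmM, ?_⟩
      rcases eq_or_lt_of_le hm.2 with h | h
      · right; simp [← h]
      · left; exact ⟨hx, h⟩
    have : T.Finite := Set.Finite.subset
      (Set.Finite.biUnion hMfin (fun m hm => ((hcon m hm.1).union (Set.finite_singleton m))))
      hcover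
    exact hT this
  choose F hF1 hF2 using fun (p : {T : Set P // T.Infinite}) => key p.1 p.2
  let g : ℕ → {T : Set P // T.Infinite} := fun n =>
    Nat.rec ⟨S, hS⟩ (fun _ p => ⟨{x ∈ p.1 | F p < x}, hF2 p⟩) n
  have hgsucc : ∀ n, (g (n + 1)).1 = {x ∈ (g n).1 | F (g n) < x} := fun n => rfl
  have hgS : ∀ n, (g n).1 ⊆ S := by
    intro n
    induction n with
    | zero => exact fun x hx => hx
    | succ n ih => rw [hgsucc]; exact fun x hx => ih hx.1
  refine ⟨fun n => F (g n), strictMono_nat_of_lt_succ ?_, fun n => hgS n (hF1 (g n))⟩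
  intro n
  have h1 : F (g (n + 1)) ∈ (g (n + 1)).1 := hF1 (g (n + 1))
  rw [hgsucc] at h1
  exact h1.2

lemma dir34 (hinf : Infinite P) (key : ∀ x : P, {y : P | ¬ x ≤ y}.Finite)
    (le' : P → P → Prop) (hlin : IsLinearOrder P le') (hext : ∀ x y : P, x ≤ y → le' x y) :
    ∃ e : P ≃ ℕ, ∀ x y : P, le' x y ↔ e x ≤ e y := by
  haveI := hlin
  set pred : P → Set P := fun x => {y | le' y x ∧ y ≠ x} with hpreddef
  have hpred : ∀ x, (pred x).Finite := by
    intro x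
    apply (key x).subset
    rintro y ⟨h1, h2⟩
    intro hxy
    exact h2 (antisymm h1 (hext _ _ hxy))
  set e0 : P → ℕ := fun x => (pred x).ncard with he0
  -- strict monotonicity
  have hmono : ∀ x y : P, le' x y → x ≠ y → e0 x < e0 y := by
    intro x y h hne
    apply Set.ncard_lt_ncard _ (hpred y)
    constructor
    · rintro z ⟨h1, h2⟩
      refine ⟨_root_.trans h1 h, fun hzy => ?_⟩
      subst hzy
      exact hne (antisymm h h1)
    · intro hsub
      have : x ∈ pred y := ⟨h, hne⟩
      exact (hsub this).2 rfl
  have hle : ∀ x y : P, le' x y ↔ e0 x ≤ e0 y := by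
    intro x y
    constructor
    · intro h
      rcases eq_or_ne x y with rfl | hne
      · exact le_refl _
      · exact (hmono x y h hne).le
    · intro h
      by_contra hcon
      rcases total_of le' x y with h' | h'
      · exact hcon h'
      · have hne : y ≠ x := fun hyx => hcon (hyx ▸ refl_of le' x)
        exact absurd h (not_le.mpr (hmono y x h' hne))
  have hinj : Function.Injective e0 := by
    intro x y h
    exact antisymm ((hle x y).mpr h.le) ((hle y x).mpr h.ge)
  -- unboundedness
  have hunbdd : ∀ n : ℕ, ∃ x : P, n ≤ e0 x := by
    intro n
    by_contra hcon
    push_neg at hcon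
    haveI : Finite P := Finite.of_injective (fun x => (⟨e0 x, hcon x⟩ : Fin n)) (by
      intro x y h
      exact hinj (by simpa using congrArg Fin.val h))
    haveI := hinf
    exact not_finite P
  -- descent step
  have hstep : ∀ x : P, 0 < e0 x → ∃ y : P, e0 y = e0 x - 1 := by
    intro x hx
    have hne : (pred x).Nonempty := Set.nonempty_of_ncard_ne_zero hx.ne'
    obtain ⟨y, hy, hymax⟩ := Set.exists_max_image (pred x) e0 (hpred x) hne
    refine ⟨y, ?_⟩
    have hpy : pred y = pred x \ {y} := by
      ext z
      constructor
      · rintro ⟨h1, h2⟩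
        have hzx : le' z x := _root_.trans h1 hy.1
        refine ⟨⟨hzx, fun hzz => ?_⟩, h2⟩
        subst hzz
        exact hy.2 (antisymm hy.1 h1)
      · rintro ⟨hz, hzy⟩
        refine ⟨(hle z y).mpr (hymax z hz), hzy⟩
    rw [he0]
    simp only
    rw [hpy, Set.ncard_diff_singleton_of_mem hy]
  have hdesc : ∀ d : ℕ, ∀ x : P, d ≤ e0 x → ∃ y : P, e0 y = e0 x - d := by
    intro d
    induction d with
    | zero => exact fun x _ => ⟨x, rfl⟩
    | succ d ih =>
      intro x hdx
      obtain ⟨y, hy⟩ := ih x (by omega)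
      obtain ⟨z, hz⟩ := hstep y (by omega)
      exact ⟨z, by omega⟩
  have hsurj : Function.Surjective e0 := by
    intro n
    obtain ⟨x, hx⟩ := hunbdd n
    obtain ⟨y, hy⟩ := hdesc (e0 x - n) x (by omega)
    exact ⟨y, by omega⟩
  refine ⟨Equiv.ofBijective e0 ⟨hinj, hsurj⟩, fun x y => hle x y⟩

end AuxLemmas

/-- For an infinite poset `P`, the following are equivalent:
(i) `P` is wqo and every ideal of `P` distinct from `P` is principal;
(ii) `P` has no infinite antichain and every ideal of `P` distinct from `P` is finite;
(iii) every proper initial segment of `P` is finite;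
(iv) every linear extension of `P` has order type `ω`;
(v) `P` is well-founded, level-finite, of height `ω`, and for each `n` there is `m` such
that each element of height at most `n` is below every element of height at least `m`;
(vi) `P` embeds no infinite antichain, no chain of type `ω*`, no chain of type `ω + 1`,
and no direct sum `ω ⊕ 1`. -/

theorem stmt12 {P : Type*} [PartialOrder P] (hinf : Infinite P) :
    List.TFAE [
      IsWqo ((· ≤ ·) : P → P → Prop) ∧
        ∀ I : Set P, IsIdealRel (· ≤ ·) I → I ≠ Set.univ → IsPrincipalRel (· ≤ ·) I,
      (¬ ∃ A : Set P, IsAntichain (· ≤ ·) A ∧ A.Infinite) ∧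
        ∀ I : Set P, IsIdealRel (· ≤ ·) I → I ≠ Set.univ → I.Finite,
      ∀ I : Set P, IsLowerSet I → I ≠ Set.univ → I.Finite,
      ∀ le' : P → P → Prop, IsLinearOrder P le' → (∀ x y : P, x ≤ y → le' x y) →
        ∃ e : P ≃ ℕ, ∀ x y : P, le' x y ↔ e x ≤ e y,
      WellFoundedLT P ∧ (∀ n : ℕ, {x : P | HeightIs x n}.Finite) ∧
        (∀ x : P, ∃ n : ℕ, HeightIs x n) ∧ (∀ n : ℕ, ∃ x : P, ChainTo x n) ∧
        (∀ n : ℕ, ∃ m : ℕ, ∀ x y : P, ¬ ChainTo x (n + 1) → ChainTo y m → x < y),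
      (¬ ∃ A : Set P, IsAntichain (· ≤ ·) A ∧ A.Infinite) ∧
        (¬ ∃ f : ℕ → P, ∀ n, f (n + 1) < f n) ∧
        (¬ ∃ f : ℕ → P, ∃ x : P, StrictMono f ∧ ∀ n, f n < x) ∧
        ¬ ∃ f : ℕ → P, ∃ x : P, StrictMono f ∧ ∀ n, ¬ f n ≤ x ∧ ¬ x ≤ f n
    ] := by
  classical
  -- helper: ideals are lower sets
  have hidlow : ∀ I : Set P, IsIdealRel (· ≤ ·) I → IsLowerSet I := by
    rintro I ⟨-, hdc, -⟩ a b hba ha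
    exact hdc b a hba ha
  -- helper: from (3), complements of principal up-sets are finite
  have hkey : (∀ I : Set P, IsLowerSet I → I ≠ Set.univ → I.Finite) →
      ∀ x : P, {y : P | ¬ x ≤ y}.Finite := by
    intro h3 x
    apply h3
    · intro a b hba ha hxb
      exact ha (hxb.trans hba)
    · intro h
      have hx : x ∈ {y : P | ¬ x ≤ y} := h.symm ▸ Set.mem_univ x
      exact hx (le_refl x)
  -- helper: antichains are finite
  have hach : (∀ x : P, {y : P | ¬ x ≤ y}.Finite) →
      ∀ A : Set P, IsAntichain (· ≤ ·) A → A.Finite := by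
    intro hk A hA
    rcases A.eq_empty_or_nonempty with rfl | ⟨a, ha⟩
    · exact Set.finite_empty
    · refine ((hk a).insert a).subset ?_
      intro b hb
      rcases eq_or_ne b a with rfl | hne
      · exact Set.mem_insert _ _
      · exact Set.mem_insert_of_mem _ (hA ha hb (Ne.symm hne))
  -- helper: strict down-sets are finite
  have hltfin : (∀ x : P, {y : P | ¬ x ≤ y}.Finite) →
      ∀ x : P, {y : P | y < x}.Finite := by
    intro hk x
    refine (hk x).subset ?_
    intro y hy hxy
    exact hy.ne' (le_antisymm hxy hy.le)
  -- helper: no descending sequences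
  have hnodesc : (∀ x : P, {y : P | y < x}.Finite) →
      ¬ ∃ f : ℕ → P, ∀ n, f (n + 1) < f n := by
    intro hl
    rintro ⟨f, hf⟩
    have hanti : StrictAnti f := strictAnti_nat_of_succ_lt hf
    have hsub : Set.range (fun n => f (n + 1)) ⊆ {y : P | y < f 0} := by
      rintro y ⟨n, rfl⟩
      exact hanti (Nat.succ_pos n)
    exact Set.infinite_range_of_injective
      (fun a b hab => Nat.succ_injective (hanti.injective hab))
      ((hl (f 0)).subset hsub)
  -- helper: every element has a height
  have hheights : (∀ x : P, {y : P | y < x}.Finite) → ∀ x : P, ∃ n : ℕ, HeightIs x n := by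
    intro hl x
    set N := (hl x).toFinset.card with hN
    have hbdd : ∀ n : ℕ, ChainTo x n → n ≤ N := fun n hn => chainTo_le_card hn (hl x)
    refine ⟨Nat.findGreatest (ChainTo x) N, ?_, ?_⟩
    · exact Nat.findGreatest_spec (Nat.zero_le N) (chainTo_zero x)
    · intro hc
      have h1 := Nat.le_findGreatest (hbdd _ hc) hc
      have h2 := Nat.findGreatest_le (P := ChainTo x) N
      omega
  -- helper: antichain sequence from infinite antichain
  have hacseq : (¬ ∃ f : ℕ → P, ∀ m n : ℕ, m ≠ n → ¬ f m ≤ f n) →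
      ¬ ∃ A : Set P, IsAntichain (· ≤ ·) A ∧ A.Infinite := by
    rintro h ⟨A, hA, hAinf⟩
    let emb := hAinf.natEmbedding
    exact h ⟨fun n => (emb n : P), fun m n hmn =>
      hA (emb m).2 (emb n).2 (fun he => hmn (emb.injective (Subtype.ext he)))⟩
  tfae_have 3 → 1
  | h3 => by
    have hk := hkey h3
    have hl := hltfin hk
    constructor
    · constructor
      · rintro ⟨f, hf⟩
        exact hnodesc hl ⟨f, fun n => lt_of_le_of_ne (hf n).1
          (fun he => (hf n).2 (he ▸ le_refl _))⟩
      · rintro ⟨f, hf⟩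
        have hinj : Function.Injective f := by
          intro m n hmn
          by_contra hne
          exact hf m n hne (hmn ▸ le_refl _)
        have hsub : Set.range (fun n => f (n + 1)) ⊆ {y : P | ¬ f 0 ≤ y} := by
          rintro y ⟨n, rfl⟩
          exact hf 0 (n + 1) (by omega)
        exact Set.infinite_range_of_injective
          (fun a b hab => Nat.succ_injective (hinj hab)) ((hk (f 0)).subset hsub)
    · intro I hI hIne
      have hIfin : I.Finite := h3 I (hidlow I hI) hIne
      obtain ⟨hne, hdc, hdir⟩ := hI
      obtain ⟨a, ha, hmax⟩ := Set.Finite.exists_maximalFor id I hIfin hne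
      refine ⟨a, ha, fun x hx => ?_⟩
      obtain ⟨z, hz, hxz, haz⟩ := hdir x hx a ha
      have : a = z := le_antisymm haz (hmax hz haz)
      exact this ▸ hxz
  tfae_have 3 → 2
  | h3 => by
    have hk := hkey h3
    refine ⟨?_, fun I hI hIne => h3 I (hidlow I hI) hIne⟩
    rintro ⟨A, hA, hAinf⟩
    exact hAinf (hach hk A hA)
  tfae_have 3 → 4
  | h3 => dir34 hinf (hkey h3)
  tfae_have 3 → 6
  | h3 => by
    have hk := hkey h3
    have hl := hltfin hk
    refine ⟨?_, hnodesc hl, ?_, ?_⟩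
    · rintro ⟨A, hA, hAinf⟩
      exact hAinf (hach hk A hA)
    · rintro ⟨f, x, hf, hfx⟩
      have hsub : Set.range f ⊆ {y : P | y < x} := by
        rintro y ⟨n, rfl⟩; exact hfx n
      exact Set.infinite_range_of_injective hf.injective ((hl x).subset hsub)
    · rintro ⟨f, x, hf, hfx⟩
      have hsub : Set.range f ⊆ {y : P | ¬ x ≤ y} := by
        rintro y ⟨n, rfl⟩; exact (hfx n).2
      exact Set.infinite_range_of_injective hf.injective ((hk x).subset hsub)
  tfae_have 3 → 5
  | h3 => by
    have hk := hkey h3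
    have hl := hltfin hk
    have hht := hheights hl
    have hlev : ∀ n : ℕ, {x : P | HeightIs x n}.Finite := by
      intro n
      apply hach hk
      intro x hx y hy hne hxy
      have : x < y := lt_of_le_of_ne hxy hne
      exact hy.2 (chainTo_succ hx.1 this)
    choose htf hhtf using hht
    refine ⟨⟨?_⟩, hlev, fun x => ⟨htf x, hhtf x⟩, ?_, ?_⟩
    · rw [RelEmbedding.wellFounded_iff_isEmpty]
      constructor
      intro g
      exact hnodesc hl ⟨fun n => g n, fun n => g.map_rel_iff.mpr (Nat.lt_succ_self n)⟩
    · intro n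
      by_contra hcon
      push_neg at hcon
      have hcov : (Set.univ : Set P) ⊆ ⋃ k ∈ Finset.range n, {x : P | HeightIs x k} := by
        intro x _
        have hklt : htf x < n := by
          by_contra hge
          exact hcon x (chainTo_mono (hhtf x).1 (by omega))
        simp only [Set.mem_iUnion]
        exact ⟨htf x, by simpa using hklt, hhtf x⟩
      have hfin : (Set.univ : Set P).Finite :=
        Set.Finite.subset (Set.Finite.biUnion (Finset.range n).finite_toSet
          (fun k _ => hlev k)) hcov
      haveI := hinf
      exact Set.infinite_univ hfin
    · intro n
      set F := {x : P | ¬ ChainTo x (n + 1)} with hF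
      have hFfin : F.Finite := by
        refine Set.Finite.subset (Set.Finite.biUnion (Finset.range (n + 1)).finite_toSet
          (fun k _ => hlev k)) ?_
        intro x hx
        have hkle : htf x ≤ n := by
          by_contra hge
          exact hx (chainTo_mono (hhtf x).1 (by omega))
        simp only [Set.mem_iUnion]
        exact ⟨htf x, by simpa using by omega, hhtf x⟩
      set G := F ∪ ⋃ x ∈ F, {y : P | ¬ x ≤ y} with hG
      have hGfin : G.Finite := hFfin.union (hFfin.biUnion (fun x _ => hk x))
      refine ⟨hGfin.toFinset.sup (fun g => htf g + 1), ?_⟩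
      intro x y hx hy
      have hyG : y ∉ G := by
        intro hyG
        have hle : htf y + 1 ≤ hGfin.toFinset.sup (fun g => htf g + 1) :=
          Finset.le_sup (f := fun g => htf g + 1) (hGfin.mem_toFinset.mpr hyG)
        exact (hhtf y).2 (chainTo_mono hy hle)
      have hxy : x ≤ y := by
        by_contra hnxy
        exact hyG (Set.mem_union_right _ (Set.mem_biUnion hx hnxy))
      refine lt_of_le_of_ne hxy ?_
      rintro rfl
      exact hyG (Set.mem_union_left _ hx)
  tfae_have 1 → 3
  | h1 => by
    obtain ⟨⟨hd, ha⟩, hid⟩ := h1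
    intro L hL hLne
    by_contra hLfin
    have hLinf : L.Infinite := hLfin
    have hdesc : ¬ ∃ f : ℕ → P, ∀ n, f (n + 1) < f n := by
      rintro ⟨f, hf⟩
      exact hd ⟨f, fun n => ⟨(hf n).le, fun hle => (lt_irrefl (f (n + 1))) ((hf n).trans_le hle)⟩⟩
    obtain ⟨f, hf, hfL⟩ := lemA (hacseq ha) hdesc L hLinf
    obtain ⟨p, hp⟩ := Set.ne_univ_iff_exists_notMem L |>.mp hLne
    set I := {x : P | ∃ n, x ≤ f n} with hI
    have hIideal : IsIdealRel (· ≤ ·) I := by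
      refine ⟨⟨f 0, 0, le_refl _⟩, ?_, ?_⟩
      · rintro x y hxy ⟨n, hyn⟩
        exact ⟨n, hxy.trans hyn⟩
      · rintro x ⟨m, hm⟩ y ⟨n, hn⟩
        exact ⟨f (max m n), ⟨max m n, le_refl _⟩,
          hm.trans (hf.monotone (le_max_left m n)), hn.trans (hf.monotone (le_max_right m n))⟩
    have hIsub : I ⊆ L := by
      rintro x ⟨n, hn⟩
      exact hL hn (hfL n)
    have hIne : I ≠ Set.univ := fun h => hp (hIsub (h.symm ▸ Set.mem_univ p))
    obtain ⟨a, ha', hamax⟩ := hid I hIideal hIne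
    obtain ⟨n, hn⟩ := ha'
    have : f (n + 1) ≤ a := hamax (f (n + 1)) ⟨n + 1, le_refl _⟩
    exact lt_irrefl (f n) (lt_of_lt_of_le (hf (Nat.lt_succ_self n)) (this.trans hn))
  tfae_have 2 → 3
  | h2 => by
    obtain ⟨hac, hid⟩ := h2
    have hdesc : ¬ ∃ f : ℕ → P, ∀ n, f (n + 1) < f n := by
      rintro ⟨f, hf⟩
      have hanti : StrictAnti f := strictAnti_nat_of_succ_lt hf
      have hIideal : IsIdealRel (· ≤ ·) {x : P | x ≤ f 1} := by
        refine ⟨⟨f 1, le_refl _⟩, fun x y hxy hy => hxy.trans hy, ?_⟩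
        intro x hx y hy
        exact ⟨f 1, le_refl _, hx, hy⟩
      have hIne : {x : P | x ≤ f 1} ≠ Set.univ := by
        intro h
        have : f 0 ∈ {x : P | x ≤ f 1} := h.symm ▸ Set.mem_univ (f 0)
        exact lt_irrefl (f 1) ((hanti (Nat.lt_succ_self 0)).trans_le this)
      have hIfin := hid _ hIideal hIne
      have hsub : Set.range (fun n => f (n + 1)) ⊆ {x : P | x ≤ f 1} := by
        rintro y ⟨n, rfl⟩
        exact (hanti.antitone (by omega))
      exact Set.infinite_range_of_injective
        (fun a b hab => Nat.succ_injective (hanti.injective hab)) (hIfin.subset hsub)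
    intro L hL hLne
    by_contra hLfin
    have hLinf : L.Infinite := hLfin
    obtain ⟨f, hf, hfL⟩ := lemA hac hdesc L hLinf
    have hIideal : IsIdealRel (· ≤ ·) {x : P | ∃ n, x ≤ f n} := by
      refine ⟨⟨f 0, 0, le_refl _⟩, ?_, ?_⟩
      · rintro x y hxy ⟨n, hyn⟩
        exact ⟨n, hxy.trans hyn⟩
      · rintro x ⟨m, hm⟩ y ⟨n, hn⟩
        exact ⟨f (max m n), ⟨max m n, le_refl _⟩,
          hm.trans (hf.monotone (le_max_left m n)), hn.trans (hf.monotone (le_max_right m n))⟩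
    have hIsub : {x : P | ∃ n, x ≤ f n} ⊆ L := by
      rintro x ⟨n, hn⟩
      exact hL hn (hfL n)
    obtain ⟨p, hp⟩ := Set.ne_univ_iff_exists_notMem L |>.mp hLne
    have hIne : {x : P | ∃ n, x ≤ f n} ≠ Set.univ :=
      fun h => hp (hIsub (h.symm ▸ Set.mem_univ p))
    have hIfin := hid _ hIideal hIne
    have hsub : Set.range f ⊆ {x : P | ∃ n, x ≤ f n} := by
      rintro y ⟨n, rfl⟩
      exact ⟨n, le_refl _⟩
    exact Set.infinite_range_of_injective hf.injective (hIfin.subset hsub)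
  tfae_have 4 → 3
  | h4 => by
    intro L hL hLne
    obtain ⟨p, hp⟩ := Set.ne_univ_iff_exists_notMem L |>.mp hLne
    set r : P → P → Prop := fun x y => x ≤ y ∨ (x ∈ L ∧ y ∉ L) with hr
    haveI hpo : IsPartialOrder P r :=
      { refl := fun a => Or.inl (le_refl a)
        trans := by
          rintro a b c (hab | ⟨haL, hbL⟩) (hbc | ⟨hbL', hcL⟩)
          · exact Or.inl (hab.trans hbc)
          · exact Or.inr ⟨hL hab hbL', hcL⟩
          · exact Or.inr ⟨haL, fun hcL' => hbL (hL hbc hcL')⟩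
          · exact (hbL hbL').elim
        antisymm := by
          rintro a b (hab | ⟨haL, hbL⟩) (hba | ⟨hbL', haL'⟩)
          · exact le_antisymm hab hba
          · exact (haL' (hL hab hbL')).elim
          · exact (hbL (hL hba haL)).elim
          · exact (hbL hbL').elim }
    obtain ⟨s, hslin, hrs⟩ := extend_partialOrder r
    obtain ⟨e, he⟩ := h4 s hslin (fun x y hxy => hrs x y (Or.inl hxy))
    have hsub : L ⊆ e ⁻¹' (Set.Iic (e p)) := by
      intro x hx
      have hs : s x p := hrs x p (Or.inr ⟨hx, hp⟩)
      exact (he x p).mp hs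
    exact ((Set.finite_Iic (e p)).preimage (e.injective.injOn)).subset hsub
  tfae_have 5 → 3
  | h5 => by
    obtain ⟨-, hlev, hht, -, hbd⟩ := h5
    intro L hL hLne
    obtain ⟨p, hp⟩ := Set.ne_univ_iff_exists_notMem L |>.mp hLne
    obtain ⟨n0, hn0⟩ := hht p
    obtain ⟨m, hm⟩ := hbd n0
    refine Set.Finite.subset (Set.Finite.biUnion (Finset.range m).finite_toSet
      (fun k _ => hlev k)) ?_
    intro x hx
    obtain ⟨k, hk⟩ := hht x
    have hklt : k < m := by
      by_contra hge
      have hcxm : ChainTo x m := chainTo_mono hk.1 (by omega)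
      have hpn : ¬ ChainTo p (n0 + 1) := hn0.2
      have : p < x := hm p x hpn hcxm
      exact hp (hL this.le hx)
    simp only [Set.mem_iUnion]
    exact ⟨k, by simpa using hklt, hk⟩
  tfae_have 6 → 3
  | h6 => by
    obtain ⟨hac, hdesc, hom1, hsum⟩ := h6
    intro L hL hLne
    by_contra hLfin
    have hLinf : L.Infinite := hLfin
    obtain ⟨p, hp⟩ := Set.ne_univ_iff_exists_notMem L |>.mp hLne
    obtain ⟨f, hf, hfL⟩ := lemA hac hdesc L hLinf
    have hnp : ∀ n, ¬ p ≤ f n := fun n hle => hp (hL hle (hfL n))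
    have hne : ∀ n, f n ≠ p := fun n he => hp (he ▸ hfL n)
    rcases Set.finite_or_infinite {n : ℕ | f n ≤ p} with hT | hT
    · have hTc : {n : ℕ | ¬ f n ≤ p}.Infinite := by
        have := hT.infinite_compl
        simpa [Set.compl_setOf] using this
      refine hsum ⟨f ∘ Nat.nth (fun n => ¬ f n ≤ p), p,
        hf.comp (Nat.nth_strictMono hTc), fun n => ⟨Nat.nth_mem_of_infinite hTc n, hnp _⟩⟩
    · refine hom1 ⟨f ∘ Nat.nth (fun n => f n ≤ p), p,
        hf.comp (Nat.nth_strictMono hT), fun n =>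
          lt_of_le_of_ne (Nat.nth_mem_of_infinite hT n) (hne _)⟩
  tfae_finish
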